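/- arXiv:2305.00276 — 2 statements merged into one kernel-verified Lean document; each statement's English description precedes it below -/
import Mathlib

section
/- Suppose a₁=2. If s>2 and (1,s−1),(1,p−1)∈∂̃(Γ), then p^{(1,s−1)}_{(1,p−1),(p−1,1)}=0. -/
namespace Paper

/-- A digraph: a set of vertices together with a set of arcs (ordered pairs of
distinct vertices). -/
structure Digraph (V : Type*) where
  Adj : V → V → Prop
  loopless : ∀ v : V, ¬ Adj v v

variable {V V' : Type*}

namespace Digraph

/-- There is a directed walk of length `n` from `x` to `y`. -/
def HasPath (G : Digraph V) (x y : V) (n : ℕ) : Prop :=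
  ∃ f : ℕ → V, f 0 = x ∧ f n = y ∧ ∀ k < n, G.Adj (f k) (f (k + 1))

/-- The distance `∂(x,y)`: the length of a shortest directed path from `x` to `y`. -/
noncomputable def dist (G : Digraph V) (x y : V) : ℕ :=
  sInf {n | G.HasPath x y n}

/-- The two-way distance `∂̃(x,y) = (∂(x,y), ∂(y,x))`. -/
noncomputable def tdist (G : Digraph V) (x y : V) : ℕ × ℕ :=
  (G.dist x y, G.dist y x)

/-- The two-way distance set `∂̃(Γ)`. -/
def tdSet (G : Digraph V) : Set (ℕ × ℕ) :=
  {p | ∃ x y : V, G.tdist x y = p}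

def StronglyConnected (G : Digraph V) : Prop :=
  ∀ x y : V, ∃ n, G.HasPath x y n

/-- `P_{ĩ,j̃}(x,y)`: the set of `z` with `∂̃(x,z) = ĩ` and `∂̃(z,y) = j̃`. -/
def P (G : Digraph V) (i j : ℕ × ℕ) (x y : V) : Set V :=
  {z | G.tdist x z = i ∧ G.tdist z y = j}

open Classical in
/-- The intersection number `p^{h̃}_{ĩ,j̃}`, defined using an arbitrarily chosen
pair at two-way distance `h̃` (and `0` if there is no such pair). -/
noncomputable def p (G : Digraph V) (h i j : ℕ × ℕ) : ℕ :=
  if hh : ∃ xy : V × V, G.tdist xy.1 xy.2 = h then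
    Nat.card (G.P i j hh.choose.1 hh.choose.2)
  else 0

/-- A weakly distance-regular digraph: strongly connected, and
`|P_{ĩ,j̃}(x,y)|` depends only on `∂̃(x,y)`, `ĩ` and `j̃`. -/
def IsWDR (G : Digraph V) : Prop :=
  G.StronglyConnected ∧
    ∀ (i j : ℕ × ℕ) (x y : V), Nat.card (G.P i j x y) = G.p (G.tdist x y) i j

/-- Commutativity: `p^{h̃}_{ĩ,j̃} = p^{h̃}_{j̃,ĩ}` for all `h̃,ĩ,j̃ ∈ ∂̃(Γ)`. -/
def IsCommutative (G : Digraph V) : Prop :=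
  ∀ h i j : ℕ × ℕ, h ∈ G.tdSet → i ∈ G.tdSet → j ∈ G.tdSet → G.p h i j = G.p h j i

/-- `Γ` is an undirected graph, i.e. its arc set is symmetric. -/
def IsUndirected (G : Digraph V) : Prop :=
  ∀ x y : V, G.Adj x y → G.Adj y x

def IsSemicomplete (G : Digraph V) : Prop :=
  ∀ x y : V, x ≠ y → (G.Adj x y ∨ G.Adj y x)

/-- `Γ` is a complete (undirected) graph. -/
def IsCompleteDigraph (G : Digraph V) : Prop :=
  ∀ x y : V, x ≠ y → (G.Adj x y ∧ G.Adj y x)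

/-- The underlying graph of a digraph. -/
def underlying (G : Digraph V) : SimpleGraph V where
  Adj x y := G.Adj x y ∨ G.Adj y x
  symm := ⟨fun _ _ h => h.symm⟩
  loopless := ⟨fun x h => h.elim (G.loopless x) (G.loopless x)⟩

/-- The diameter: the maximum value of the distance function. -/
noncomputable def diameter (G : Digraph V) : ℕ :=
  sSup {n | ∃ x y : V, G.dist x y = n}

/-- The girth: the length of a shortest circuit. -/
noncomputable def girth (G : Digraph V) : ℕ :=
  sInf {n | 0 < n ∧ ∃ x : V, G.HasPath x x n}

/-- Number of out-neighbours `d⁺(x)`. -/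
noncomputable def outDeg (G : Digraph V) (x : V) : ℕ := Nat.card {y | G.Adj x y}

/-- Number of in-neighbours `d⁻(x)`. -/
noncomputable def inDeg (G : Digraph V) (x : V) : ℕ := Nat.card {y | G.Adj y x}

def IsIsomorphicTo (G : Digraph V) (G' : Digraph V') : Prop :=
  ∃ e : V ≃ V', ∀ x y : V, G.Adj x y ↔ G'.Adj (e x) (e y)

/-- The Cartesian product of two digraphs. -/
def box (G : Digraph V) (G' : Digraph V') : Digraph (V × V') where
  Adj x y := (x.1 = y.1 ∧ G'.Adj x.2 y.2) ∨ (G.Adj x.1 y.1 ∧ x.2 = y.2)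
  loopless := fun v h => h.elim (fun h' => G'.loopless v.2 h'.2) (fun h' => G.loopless v.1 h'.1)

/-- Two digraphs have the same intersection numbers. -/
def SameIntersectionNumbers (G : Digraph V) (G' : Digraph V') : Prop :=
  G.tdSet = G'.tdSet ∧
    ∀ h i j : ℕ × ℕ, h ∈ G.tdSet → i ∈ G.tdSet → j ∈ G.tdSet → G.p h i j = G'.p h i j

/-- Induced subdigraph on a set of vertices. -/
def induce (G : Digraph V) (s : Set V) : Digraph s where
  Adj x y := G.Adj x.1 y.1
  loopless := fun v h => G.loopless v.1 h

end Digraph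

/-- The Cartesian product of a family of digraphs. -/
def piBox {ι : Type*} {W : ι → Type*} (G : ∀ i, Digraph (W i)) : Digraph (∀ i, W i) where
  Adj x y := ∃ i, (G i).Adj (x i) (y i) ∧ ∀ j, j ≠ i → x j = y j
  loopless := by
    rintro v ⟨i, hi, -⟩
    exact (G i).loopless _ hi

/-- The Cayley digraph `Cay(A,S)` of an additive group (for `S ⊆ A ∖ {0}`). -/
def Cay (A : Type*) [AddGroup A] (S : Set A) : Digraph A where
  Adj x y := x ≠ y ∧ y - x ∈ S
  loopless := fun _ h => h.1 rfl

/-- The Cayley graph of an additive group with respect to a symmetric connection set. -/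
def cayleyGraph (A : Type*) [AddGroup A] (S : Set A) : SimpleGraph A where
  Adj x y := x ≠ y ∧ (y - x ∈ S ∨ x - y ∈ S)
  symm := ⟨fun _ _ h => ⟨h.1.symm, h.2.symm⟩⟩
  loopless := ⟨fun _ h => h.1 rfl⟩

/-- The Hamming graph `H(ι, S)`: vertices are tuples, adjacent iff they differ in
exactly one coordinate. -/
def hammingGraph (ι : Type*) (S : Type*) : SimpleGraph (ι → S) where
  Adj x y := ∃ i, x i ≠ y i ∧ ∀ j, j ≠ i → x j = y j
  symm := by
    constructor
    rintro x y ⟨i, h1, h2⟩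
    exact ⟨i, h1.symm, fun j hj => (h2 j hj).symm⟩
  loopless := by
    constructor
    rintro x ⟨i, h1, -⟩
    exact h1 rfl

/-- The folded `n`-cube: vertices are `(n-1)`-tuples over `ℤ₂`, adjacent iff they
differ in exactly one coordinate or in all `n-1` coordinates. -/
def foldedCube (n : ℕ) : SimpleGraph (Fin (n - 1) → ZMod 2) where
  Adj x y := (∃ i, x i ≠ y i ∧ ∀ j, j ≠ i → x j = y j) ∨ (x ≠ y ∧ ∀ j, x j ≠ y j)
  symm := by
    constructor
    rintro x y (⟨i, h1, h2⟩ | ⟨h1, h2⟩)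
    · exact Or.inl ⟨i, h1.symm, fun j hj => (h2 j hj).symm⟩
    · exact Or.inr ⟨h1.symm, fun j => (h2 j).symm⟩
  loopless := by
    constructor
    rintro x (⟨i, h1, -⟩ | ⟨h1, -⟩)
    · exact h1 rfl
    · exact h1 rfl

/-- The Cartesian product of a family of simple graphs. -/
def piBoxGraph {ι : Type*} {W : ι → Type*} (G : ∀ i, SimpleGraph (W i)) :
    SimpleGraph (∀ i, W i) where
  Adj x y := ∃ i, (G i).Adj (x i) (y i) ∧ ∀ j, j ≠ i → x j = y j
  symm := by
    constructor
    rintro x y ⟨i, h1, h2⟩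
    exact ⟨i, (G i).symm.symm _ _ h1, fun j hj => (h2 j hj).symm⟩
  loopless := by
    constructor
    rintro x ⟨i, h1, -⟩
    exact (G i).loopless.irrefl _ h1

/-- The Shrikhande graph `Cay(ℤ₄ × ℤ₄, {±(1,0), ±(0,1), ±(1,1)})`. -/
def shrikhande : SimpleGraph (ZMod 4 × ZMod 4) :=
  cayleyGraph (ZMod 4 × ZMod 4) {(1, 0), (-1, 0), (0, 1), (0, -1), (1, 1), (-1, -1)}

/-- The Doob graph `G(d₁, d₂)`: the Cartesian product of `d₁` copies of the
Shrikhande graph with the Hamming graph `H(d₂, 4)`. -/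
def doobGraph (d₁ d₂ : ℕ) :
    SimpleGraph ((Fin d₁ → ZMod 4 × ZMod 4) × (Fin d₂ → ZMod 4)) :=
  (piBoxGraph fun _ : Fin d₁ => shrikhande).boxProd (hammingGraph (Fin d₂) (ZMod 4))

/-- `c_i(x,y)`: the number of neighbours of `y` at distance `i - 1` from `x`. -/
noncomputable def cNum (G : SimpleGraph V) (i : ℕ) (x y : V) : ℕ :=
  Nat.card {z : V | G.Adj y z ∧ G.dist x z = i - 1}

/-- `a_i(x,y)`: the number of neighbours of `y` at distance `i` from `x`. -/
noncomputable def aNum (G : SimpleGraph V) (i : ℕ) (x y : V) : ℕ :=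
  Nat.card {z : V | G.Adj y z ∧ G.dist x z = i}

/-- `b_i(x,y)`: the number of neighbours of `y` at distance `i + 1` from `x`. -/
noncomputable def bNum (G : SimpleGraph V) (i : ℕ) (x y : V) : ℕ :=
  Nat.card {z : V | G.Adj y z ∧ G.dist x z = i + 1}

/-- A distance-regular graph. -/
def IsDRG (G : SimpleGraph V) : Prop :=
  G.Connected ∧
    ∀ (i : ℕ) (x y x' y' : V), G.dist x y = i → G.dist x' y' = i →
      cNum G i x y = cNum G i x' y' ∧ bNum G i x y = bNum G i x' y'

/-- A distance-transitive graph. -/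
def IsDistanceTransitive (G : SimpleGraph V) : Prop :=
  G.Connected ∧
    ∀ x y x' y' : V, G.dist x y = G.dist x' y' → ∃ σ : G ≃g G, σ x = x' ∧ σ y = y'

/-- The vertex set of `Γ_i(α)`: all tuples obtained from `α` by inserting an
arbitrary element of `S` in the `i`-th coordinate. -/
def lineSet {n : ℕ} {S : Type*} (i : Fin (n + 1)) (α : Fin n → S) : Set (Fin (n + 1) → S) :=
  Set.range fun b : S => i.insertNth b α

/-- The induced subdigraph `Γ_i(α)`. -/
def Digraph.line {n : ℕ} {S : Type*} (Γ : Digraph (Fin (n + 1) → S)) (i : Fin (n + 1))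
    (α : Fin n → S) : Digraph (lineSet i α) :=
  Γ.induce (lineSet i α)

/-- Pad a tuple of length `m` with the entry `o` to a tuple of length `d`. -/
def pad {S : Type*} (o : S) (d m : ℕ) (α : Fin m → S) : Fin d → S :=
  fun j => if h : j.1 < m then α ⟨j.1, h⟩ else o

/-- The digraph `Γ^{[m]}` on `S^m`: `(α,β)` is an arc iff the padded tuples form
an arc of `Γ`. -/
def Digraph.trunc {S : Type*} {d : ℕ} (Γ : Digraph (Fin d → S)) (o : S) (m : ℕ) :
    Digraph (Fin m → S) where
  Adj α β := Γ.Adj (pad o d m α) (pad o d m β)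
  loopless := fun _ h => Γ.loopless _ h

/-- The digraph `Γ^i` on `S`: `(a,b)` is an arc iff the tuples with `a` resp. `b`
in the `i`-th coordinate and `o` elsewhere form an arc of `Γ`. -/
def Digraph.coordDigraph {S : Type*} {d : ℕ} (Γ : Digraph (Fin d → S)) (o : S) (i : Fin d) :
    Digraph S where
  Adj a b := Γ.Adj (Function.update (fun _ => o) i a) (Function.update (fun _ => o) i b)
  loopless := fun _ h => Γ.loopless _ h

/-- The set `T = S^{m-1} × {(o,…,o)}` (as a subset of `S^{d-1}`, here `d = n+1`). -/
def Tset {n : ℕ} (S : Type*) (o : S) (m : ℕ) : Set (Fin n → S) :=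
  {α | ∀ j : Fin n, m - 1 ≤ j.1 → α j = o}

end Paper

section Aux

open Paper

variable {V : Type*}

/-- In a `Digraph`, the distance is `1` iff there is an arc. -/
lemma digraph_dist_eq_one_iff (G : Paper.Digraph V) (a b : V) :
    G.dist a b = 1 ↔ G.Adj a b := by
  unfold Paper.Digraph.dist
  constructor
  · intro h
    have hne : {n | G.HasPath a b n}.Nonempty := by
      by_contra hne
      rw [Set.not_nonempty_iff_eq_empty] at hne
      rw [hne, Nat.sInf_empty] at h
      exact one_ne_zero h.symm
    have hmem := Nat.sInf_mem hne
    rw [h] at hmem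
    obtain ⟨f, hf0, hf1, hadj⟩ := hmem
    have h01 := hadj 0 Nat.one_pos
    simp only [Nat.zero_add] at h01
    rwa [hf0, hf1] at h01
  · intro h
    have h1 : G.HasPath a b 1 := by
      refine ⟨fun k => if k = 0 then a else b, by simp, by simp, ?_⟩
      intro k hk
      interval_cases k
      simpa using h
    have hle : sInf {n | G.HasPath a b n} ≤ 1 := Nat.sInf_le h1
    have hne0 : sInf {n | G.HasPath a b n} ≠ 0 := by
      intro h0
      have hmem := Nat.sInf_mem (⟨1, h1⟩ : {n | G.HasPath a b n}.Nonempty)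
      rw [h0] at hmem
      obtain ⟨f, hf0, hf1, -⟩ := hmem
      have hab : a = b := by rw [← hf0, hf1]
      exact G.loopless a (by rw [hab] at h ⊢; exact h)
    omega

/-- Positivity transfer for `P`-sets between pairs with equal two-way distance. -/
lemma P_nonempty_transfer [Finite V] (G : Paper.Digraph V)
    (hwdr : G.IsWDR) {i j : ℕ × ℕ} {x y x' y' : V}
    (hted : G.tdist x y = G.tdist x' y')
    (hne : (G.P i j x y).Nonempty) : (G.P i j x' y').Nonempty := by
  have h1 : 0 < Nat.card (G.P i j x y) :=
    Nat.card_pos_iff.mpr ⟨Set.nonempty_coe_sort.mpr hne, Set.toFinite _⟩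
  rw [hwdr.2 i j x y, hted, ← hwdr.2 i j x' y'] at h1
  exact Set.nonempty_coe_sort.mp (Nat.card_pos_iff.mp h1).1

end Aux

open Paper in
/-- **Lemma 3.3.** Suppose `a₁ = 2`. If `s > 2`, then
`p^{(1,s−1)}_{(1,p−1),(p−1,1)} = 0`. -/
theorem lemma_zero {V : Type*} [Finite V] [Nonempty V] (Γ : Paper.Digraph V)
    (hwdr : Γ.IsWDR) (hcomm : Γ.IsCommutative)
    (hdrg : IsDRG Γ.underlying)
    (ha1 : ∀ x y : V, Γ.underlying.dist x y = 1 → aNum Γ.underlying 1 x y = 2)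
    (p s : ℕ) (hs2 : 2 < s)
    (hs : ((1 : ℕ), s - 1) ∈ Γ.tdSet) (hp : ((1 : ℕ), p - 1) ∈ Γ.tdSet) :
    Γ.p (1, s - 1) (1, p - 1) (p - 1, 1) = 0 := by
  obtain ⟨x, y, hxy⟩ := hs
  suffices hP : Γ.P (1, p - 1) (p - 1, 1) x y = ∅ by
    have h := hwdr.2 (1, p - 1) (p - 1, 1) x y
    rw [hxy] at h
    rw [← h, hP]
    simp
  by_contra hne
  rw [← ne_eq, ← Set.nonempty_iff_ne_empty] at hne
  obtain ⟨z, hz1, hz2⟩ := hne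
  -- distances coming from the two-way distances
  have hd_xy : Γ.dist x y = 1 := congrArg Prod.fst hxy
  have hd_yx : Γ.dist y x = s - 1 := congrArg Prod.snd hxy
  have hd_xz : Γ.dist x z = 1 := congrArg Prod.fst hz1
  have hd_zy : Γ.dist z y = p - 1 := congrArg Prod.fst hz2
  have hd_yz : Γ.dist y z = 1 := congrArg Prod.snd hz2
  have ht_yz : Γ.tdist y z = (1, p - 1) := by
    unfold Paper.Digraph.tdist; rw [hd_yz, hd_zy]
  have ht_yx : Γ.tdist y x = (s - 1, 1) := by
    unfold Paper.Digraph.tdist; rw [hd_yx, hd_xy]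
  -- `x` witnesses `P_{(s-1,1),(1,p-1)}(y,z) ≠ ∅`
  have hx_mem : x ∈ Γ.P (s - 1, 1) (1, p - 1) y z := ⟨ht_yx, hz1⟩
  have htr : Γ.tdist y z = Γ.tdist x z := by rw [ht_yz, hz1]
  -- transfer to the pair `(x,z)`: get `v`
  obtain ⟨v, hv1, hv2⟩ : (Γ.P (s - 1, 1) (1, p - 1) x z).Nonempty :=
    P_nonempty_transfer Γ hwdr htr ⟨x, hx_mem⟩
  -- commutativity: get `u`
  have hcomm' := hcomm (1, p - 1) (s - 1, 1) (1, p - 1)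
    ⟨x, z, hz1⟩ ⟨y, x, ht_yx⟩ ⟨x, z, hz1⟩
  have hcard : 0 < Nat.card (Γ.P (s - 1, 1) (1, p - 1) y z) :=
    Nat.card_pos_iff.mpr ⟨Set.nonempty_coe_sort.mpr ⟨x, hx_mem⟩, Set.toFinite _⟩
  rw [hwdr.2, ht_yz, hcomm'] at hcard
  have heq := hwdr.2 (1, p - 1) (s - 1, 1) x z
  rw [hz1] at heq
  rw [← heq] at hcard
  obtain ⟨u, hu1, hu2⟩ : (Γ.P (1, p - 1) (s - 1, 1) x z).Nonempty :=
    Set.nonempty_coe_sort.mp (Nat.card_pos_iff.mp hcard).1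
  -- arcs
  have axy : Γ.Adj x y := (digraph_dist_eq_one_iff Γ x y).mp hd_xy
  have ayz : Γ.Adj y z := (digraph_dist_eq_one_iff Γ y z).mp hd_yz
  have axz : Γ.Adj x z := (digraph_dist_eq_one_iff Γ x z).mp hd_xz
  have avx : Γ.Adj v x :=
    (digraph_dist_eq_one_iff Γ v x).mp (congrArg Prod.snd hv1)
  have avz : Γ.Adj v z :=
    (digraph_dist_eq_one_iff Γ v z).mp (congrArg Prod.fst hv2)
  have axu : Γ.Adj x u :=
    (digraph_dist_eq_one_iff Γ x u).mp (congrArg Prod.fst hu1)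
  have azu : Γ.Adj z u :=
    (digraph_dist_eq_one_iff Γ z u).mp (congrArg Prod.snd hu2)
  -- `y`, `v`, `u` are three distinct common neighbours of `x` and `z`
  have hyv : y ≠ v := by
    intro h
    rw [h, hv1] at hxy
    have := congrArg Prod.fst hxy
    simp only at this
    omega
  have hyu : y ≠ u := by
    intro h
    rw [h, hu2] at ht_yz
    have := congrArg Prod.fst ht_yz
    simp only at this
    omega
  have hvu : v ≠ u := by
    intro h
    rw [h, hu1] at hv1
    have := congrArg Prod.fst hv1
    simp only at this
    omega
  have hyS : y ∈ {w | Γ.underlying.Adj z w ∧ Γ.underlying.dist x w = 1} :=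
    ⟨Or.inr ayz, SimpleGraph.dist_eq_one_iff_adj.mpr (Or.inl axy)⟩
  have hvS : v ∈ {w | Γ.underlying.Adj z w ∧ Γ.underlying.dist x w = 1} :=
    ⟨Or.inr avz, SimpleGraph.dist_eq_one_iff_adj.mpr (Or.inr avx)⟩
  have huS : u ∈ {w | Γ.underlying.Adj z w ∧ Γ.underlying.dist x w = 1} :=
    ⟨Or.inl azu, SimpleGraph.dist_eq_one_iff_adj.mpr (Or.inl axu)⟩
  have h3 : 2 < ({w | Γ.underlying.Adj z w ∧ Γ.underlying.dist x w = 1} : Set V).ncard :=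
    (Set.two_lt_ncard (Set.toFinite _)).mpr
      ⟨y, hyS, v, hvS, u, huS, hyv, hyu, hvu⟩
  have ha := ha1 x z (SimpleGraph.dist_eq_one_iff_adj.mpr (Or.inl axz))
  unfold Paper.aNum at ha
  rw [Nat.card_coe_set_eq] at ha
  omega
end

section
/- Suppose q>2. Then for every 2≤i≤d, one has Γ^{[i]} = Γ^{[i−1]} □ Γ^i, i.e., for all α,β∈S^{i−1} and e,f∈S, ((α,e),(β,f)) is an arc of Γ^{[i]} if and only if (e=f and (α,β) is an arc of Γ^{[i−1]}) or (α=β and (e,f) is an arc of Γ^i). -/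
set_option linter.unusedSectionVars false

namespace Paper

open Function

variable {S : Type*} {d : ℕ}

/-- `u` and `v` differ exactly at coordinate `j`. -/
def IsDiff (u v : Fin d → S) (j : Fin d) : Prop :=
  u j ≠ v j ∧ ∀ l, l ≠ j → u l = v l

/-- `u` and `v` differ exactly at coordinates `j` and `k`. -/
def IsDiff2 (u v : Fin d → S) (j k : Fin d) : Prop :=
  u j ≠ v j ∧ u k ≠ v k ∧ ∀ l, l ≠ j → l ≠ k → u l = v l

lemma IsDiff.symm {u v : Fin d → S} {j : Fin d} (h : IsDiff u v j) : IsDiff v u j :=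
  ⟨h.1.symm, fun l hl => (h.2 l hl).symm⟩

lemma IsDiff.ne {u v : Fin d → S} {j : Fin d} (h : IsDiff u v j) : u ≠ v :=
  fun he => h.1 (congrFun he j)

lemma IsDiff.eq_update {u v : Fin d → S} {j : Fin d} (h : IsDiff u v j) :
    v = Function.update u j (v j) := by
  funext l
  by_cases hl : l = j
  · subst hl; simp
  · rw [Function.update_of_ne hl]; exact (h.2 l hl).symm

section Digraphside

variable {Γ : Digraph (Fin d → S)}

lemma adj_ne {a b : Fin d → S} (h : Γ.Adj a b) : a ≠ b := by
  rintro rfl; exact Γ.loopless _ h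

lemma diff_of_adj (hund : Γ.underlying = hammingGraph (Fin d) S) {a b : Fin d → S}
    (h : Γ.Adj a b) : ∃ j, IsDiff a b j := by
  have h2 : (Γ.underlying).Adj a b := Or.inl h
  rw [hund] at h2
  obtain ⟨j, h3, h4⟩ := h2
  exact ⟨j, h3, h4⟩

lemma adj_or_adj (hund : Γ.underlying = hammingGraph (Fin d) S) {a b : Fin d → S}
    {j : Fin d} (h : IsDiff a b j) : Γ.Adj a b ∨ Γ.Adj b a := by
  have h2 : (hammingGraph (Fin d) S).Adj a b := ⟨j, h.1, h.2⟩
  rw [← hund] at h2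
  exact h2

/-! ### distance basics -/

lemma hasPath_zero_iff {x y : Fin d → S} : Γ.HasPath x y 0 ↔ x = y := by
  constructor
  · rintro ⟨f, h0, hn, _⟩; rw [← h0, hn]
  · rintro rfl; exact ⟨fun _ => x, rfl, rfl, fun k hk => absurd hk (by omega)⟩

lemma hasPath_one_iff {x y : Fin d → S} : Γ.HasPath x y 1 ↔ Γ.Adj x y := by
  constructor
  · rintro ⟨f, h0, hn, ha⟩
    have := ha 0 (by omega)
    rwa [h0, hn] at this
  · intro h
    refine ⟨fun n => if n = 0 then x else y, by simp, by simp, ?_⟩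
    intro k hk
    have : k = 0 := by omega
    subst this; simpa using h

lemma dist_self (x : Fin d → S) : Γ.dist x x = 0 :=
  Nat.sInf_eq_zero.mpr (Or.inl (hasPath_zero_iff.mpr rfl))

lemma dist_eq_one {x y : Fin d → S} (h : Γ.Adj x y) : Γ.dist x y = 1 := by
  have h1 : (1 : ℕ) ∈ {n | Γ.HasPath x y n} := hasPath_one_iff.mpr h
  have hle : Γ.dist x y ≤ 1 := Nat.sInf_le h1
  have hne : Γ.dist x y ≠ 0 := by
    intro h0
    have : (0 : ℕ) ∈ {n | Γ.HasPath x y n} := by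
      have hnon : {n | Γ.HasPath x y n}.Nonempty := ⟨1, h1⟩
      rw [← h0]; exact Nat.sInf_mem hnon
    exact adj_ne h (hasPath_zero_iff.mp this)
  omega

lemma adj_of_dist_one (hsc : Γ.StronglyConnected) {x y : Fin d → S}
    (h : Γ.dist x y = 1) : Γ.Adj x y := by
  have hnon : {n | Γ.HasPath x y n}.Nonempty := hsc x y
  have := Nat.sInf_mem hnon
  rw [Digraph.dist] at h
  rw [h] at this
  exact hasPath_one_iff.mp this

lemma eq_of_dist_zero (hsc : Γ.StronglyConnected) {x y : Fin d → S}
    (h : Γ.dist x y = 0) : x = y := by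
  have hnon : {n | Γ.HasPath x y n}.Nonempty := hsc x y
  have := Nat.sInf_mem hnon
  rw [Digraph.dist] at h
  rw [h] at this
  exact hasPath_zero_iff.mp this

lemma tdist_rev {x y : Fin d → S} {a b : ℕ} :
    Γ.tdist x y = (a, b) ↔ Γ.tdist y x = (b, a) := by
  unfold Digraph.tdist
  constructor <;> · intro h
                    have h1 := congrArg Prod.fst h
                    have h2 := congrArg Prod.snd h
                    simp only [Prod.fst, Prod.snd] at h1 h2
                    simp [Prod.ext_iff] at *
                    omega

lemma adj_of_tdist {x y : Fin d → S} {s : ℕ} (hsc : Γ.StronglyConnected)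
    (h : Γ.tdist x y = (1, s)) : Γ.Adj x y := by
  have : Γ.dist x y = 1 := congrArg Prod.fst h
  exact adj_of_dist_one hsc this

lemma not_adj_of_tdist {x y : Fin d → S} {s t : ℕ} (h : Γ.tdist x y = (s, t))
    (hs : s ≠ 1) : ¬ Γ.Adj x y := by
  intro ha
  have : Γ.dist x y = s := congrArg Prod.fst h
  rw [dist_eq_one ha] at this
  exact hs this.symm

lemma arc_tdist (hsc : Γ.StronglyConnected) {x y : Fin d → S}
    (h1 : Γ.Adj x y) (h2 : ¬ Γ.Adj y x) : ∃ s, 2 ≤ s ∧ Γ.tdist x y = (1, s) := by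
  refine ⟨Γ.dist y x, ?_, ?_⟩
  · have hne0 : Γ.dist y x ≠ 0 := fun h0 => adj_ne h1 (eq_of_dist_zero hsc h0).symm
    have hne1 : Γ.dist y x ≠ 1 := fun h0 => h2 (adj_of_dist_one hsc h0)
    omega
  · unfold Digraph.tdist
    rw [dist_eq_one h1]

lemma tdist_self (x : Fin d → S) : Γ.tdist x x = (0, 0) := by
  unfold Digraph.tdist; rw [dist_self]

end Digraphside

end Paper

namespace Paper

variable {S : Type*} {d : ℕ}

section Swap

variable [Finite S] {Γ : Digraph (Fin d → S)}

lemma swap_card (hwdr : Γ.IsWDR) (hcomm : Γ.IsCommutative) {i j : ℕ × ℕ}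
    (hi : i ∈ Γ.tdSet) (hj : j ∈ Γ.tdSet) (x y : Fin d → S) :
    Nat.card (Γ.P i j x y) = Nat.card (Γ.P j i x y) := by
  rw [hwdr.2 i j x y, hwdr.2 j i x y, hcomm _ _ _ ⟨x, y, rfl⟩ hi hj]

lemma swap_ex (hwdr : Γ.IsWDR) (hcomm : Γ.IsCommutative) {x y z : Fin d → S} {i j : ℕ × ℕ}
    (h1 : Γ.tdist x z = i) (h2 : Γ.tdist z y = j) :
    ∃ w, Γ.tdist x w = j ∧ Γ.tdist w y = i := by
  have hi : i ∈ Γ.tdSet := ⟨x, z, h1⟩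
  have hj : j ∈ Γ.tdSet := ⟨z, y, h2⟩
  have hcard : Nat.card (Γ.P i j x y) = Nat.card (Γ.P j i x y) :=
    swap_card hwdr hcomm hi hj x y
  have hfin : Finite (Γ.P i j x y) := Set.Finite.to_subtype (Set.toFinite _)
  have hpos : 0 < Nat.card (Γ.P i j x y) :=
    Nat.card_pos_iff.mpr ⟨⟨⟨z, h1, h2⟩⟩, hfin⟩
  rw [hcard] at hpos
  obtain ⟨⟨w, hw1, hw2⟩⟩ := (Nat.card_pos_iff.mp hpos).1
  exact ⟨w, hw1, hw2⟩

end Swap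

section Pin

/-- If `w` is (Hamming-)adjacent to both `u` and `v`, and `u,v` differ exactly at `k`,
then `w` lies on the `k`-line through `u` and `v`. -/
lemma pin_line {u v w : Fin d → S} {k : Fin d}
    (huv : IsDiff u v k) (h1 : ∃ j, IsDiff w u j) (h2 : ∃ j, IsDiff w v j) :
    w = Function.update u k (w k) := by
  obtain ⟨j₁, hj₁⟩ := h1
  obtain ⟨j₂, hj₂⟩ := h2
  have hj1k : j₁ = k := by
    by_contra hne
    have hwk : w k = u k := hj₁.2 k (fun h => hne h.symm)
    have h3 : u j₁ = v j₁ := huv.2 j₁ hne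
    have d1 : w j₁ ≠ v j₁ := by rw [← h3]; exact hj₁.1
    have d2 : w k ≠ v k := by rw [hwk]; exact huv.1
    have e1 : j₁ = j₂ := by
      by_contra h; exact d1 (hj₂.2 j₁ h)
    have e2 : k = j₂ := by
      by_contra h; exact d2 (hj₂.2 k h)
    exact hne (e1.trans e2.symm)
  funext l
  by_cases hl : l = k
  · subst hl; simp
  · rw [Function.update_of_ne hl]
    exact hj₁.2 l (by rw [hj1k]; exact hl)

/-- If `w` is (Hamming-)adjacent to both `u` and `v`, and `u,v` differ exactly at
`j` and `k`, then `w` is one of the two common neighbours. -/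
lemma pin_sq {u v w : Fin d → S} {j k : Fin d} (hjk : j ≠ k) (huv : IsDiff2 u v j k)
    (h1 : ∃ i, IsDiff w u i) (h2 : ∃ i, IsDiff w v i) :
    w = Function.update u j (v j) ∨ w = Function.update u k (v k) := by
  obtain ⟨j₁, hj₁⟩ := h1
  obtain ⟨j₂, hj₂⟩ := h2
  have hmemj : j = j₁ ∨ j = j₂ := by
    by_contra h
    push_neg at h
    have e1 : w j = u j := hj₁.2 j h.1
    have e2 : w j = v j := hj₂.2 j h.2
    exact huv.1 (e1 ▸ e2)
  have hmemk : k = j₁ ∨ k = j₂ := by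
    by_contra h
    push_neg at h
    have e1 : w k = u k := hj₁.2 k h.1
    have e2 : w k = v k := hj₂.2 k h.2
    exact huv.2.1 (e1 ▸ e2)
  rcases hmemj with hj' | hj' <;> rcases hmemk with hk' | hk'
  · exact absurd (hj'.trans hk'.symm) hjk
  · -- j = j₁, k = j₂ : w = update u j (v j)
    left
    funext l
    by_cases hl : l = j
    · subst hl
      rw [Function.update_self]
      exact hj₂.2 l (by rw [← hk']; exact hjk)
    · rw [Function.update_of_ne hl]
      exact hj₁.2 l (by rw [← hj']; exact hl)
  · -- j = j₂, k = j₁ : w = update u k (v k)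
    right
    funext l
    by_cases hl : l = k
    · subst hl
      rw [Function.update_self]
      exact hj₂.2 l (by rw [← hj']; exact fun h => hjk h.symm)
    · rw [Function.update_of_ne hl]
      exact hj₁.2 l (by rw [← hk']; exact hl)
  · exact absurd (hj'.trans hk'.symm) hjk

end Pin

section UpdateAlgebra

variable {u v : Fin d → S} {j k : Fin d}

lemma isDiff_update (h : IsDiff u v j) (hk : k ≠ j) (p : S) :
    IsDiff (Function.update u k p) (Function.update v k p) j := by
  constructor
  · rw [Function.update_of_ne (Ne.symm hk), Function.update_of_ne (Ne.symm hk)]; exact h.1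
  · intro l hl
    by_cases hlk : l = k
    · subst hlk; simp
    · rw [Function.update_of_ne hlk, Function.update_of_ne hlk]
      exact h.2 l hl

lemma isDiff_line {p q : S} (hpq : p ≠ q) (u : Fin d → S) (k : Fin d) :
    IsDiff (Function.update u k p) (Function.update u k q) k := by
  constructor
  · simpa using hpq
  · intro l hl
    rw [Function.update_of_ne hl, Function.update_of_ne hl]

lemma isDiff2_diag (h : IsDiff u v j) (hk : k ≠ j) {p q : S} (hpq : p ≠ q) :
    IsDiff2 (Function.update u k p) (Function.update v k q) j k := by
  refine ⟨?_, by simpa using hpq, ?_⟩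
  · rw [Function.update_of_ne (Ne.symm hk), Function.update_of_ne (Ne.symm hk)]; exact h.1
  · intro l hl hlk
    rw [Function.update_of_ne hlk, Function.update_of_ne hlk]
    exact h.2 l hl

/-- `update (update u k p) j (v j) = update v k p` when `IsDiff u v j`. -/
lemma comm1 (h : IsDiff u v j) (hk : k ≠ j) (p : S) :
    Function.update (Function.update u k p) j (v j) = Function.update v k p := by
  rw [Function.update_comm hk]
  rw [← h.eq_update]

lemma comm2 (u : Fin d → S) (k : Fin d) (p q : S) :
    Function.update (Function.update u k p) k q = Function.update u k q :=
  Function.update_idem ..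

lemma update_injective (u : Fin d → S) (k : Fin d) :
    Function.Injective (fun p => Function.update u k p) := by
  intro p q h
  have := congrFun h k
  simpa using this

end UpdateAlgebra

end Paper

namespace Paper

variable {S : Type*} {d : ℕ}

lemma isDiff2_of {u v : Fin d → S} {j k : Fin d} (hj : IsDiff u v j) (hk : k ≠ j)
    {g : S} (hg : u k ≠ g) : IsDiff2 u (Function.update v k g) j k := by
  refine ⟨?_, ?_, ?_⟩
  · rw [Function.update_of_ne (Ne.symm hk)]; exact hj.1
  · rw [Function.update_self]; exact hg
  · intro l hl hlk
    rw [Function.update_of_ne hlk]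
    exact hj.2 l hl

lemma IsDiff2.symm {u v : Fin d → S} {j k : Fin d} (h : IsDiff2 u v j k) :
    IsDiff2 v u j k :=
  ⟨h.1.symm, h.2.1.symm, fun l hl hlk => (h.2.2 l hl hlk).symm⟩

/-- Convenient form of `pin_line` for ladders. -/
lemma pin_line' {v z : Fin d → S} {k : Fin d} {p q : S} (hpq : p ≠ q)
    (h1 : ∃ i, IsDiff z (Function.update v k p) i)
    (h2 : ∃ i, IsDiff z (Function.update v k q) i) :
    z = Function.update v k (z k) :=
  (pin_line (isDiff_line hpq v k) h1 h2).trans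
    (Function.update_idem ..)

lemma isDiff_self_update {u : Fin d → S} {k : Fin d} {g : S} (hg : u k ≠ g) :
    IsDiff u (Function.update u k g) k := by
  refine ⟨by rw [Function.update_self]; exact hg, ?_⟩
  intro l hl
  rw [Function.update_of_ne hl]

section SubMain

variable [Finite S] {Γ : Digraph (Fin d → S)}

/-- Symmetric edges transport across parallel shifts. -/
lemma submain1 (hwdr : Γ.IsWDR) (hcomm : Γ.IsCommutative)
    (hund : Γ.underlying = hammingGraph (Fin d) S)
    {u v : Fin d → S} {j k : Fin d} (hj : IsDiff u v j) (hk : k ≠ j)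
    (h1 : Γ.Adj u v) (h2 : Γ.Adj v u) (g : S) :
    Γ.Adj (Function.update u k g) (Function.update v k g) := by
  classical
  have hvk : v k = u k := (hj.2 k hk).symm
  by_cases hg : g = u k
  · subst hg
    rw [Function.update_eq_self, ← hvk, Function.update_eq_self]
    exact h1
  replace hg : u k ≠ g := fun h => hg h.symm
  have hvg : v k ≠ g := by rw [hvk]; exact hg
  by_contra hn
  have hsc := hwdr.1
  have hdj' : IsDiff (Function.update u k g) (Function.update v k g) j :=
    isDiff_update hj hk g
  have hadj' : Γ.Adj (Function.update v k g) (Function.update u k g) :=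
    (adj_or_adj hund hdj').resolve_left hn
  obtain ⟨w, hw2, hwt⟩ := arc_tdist hsc hadj' hn
  have huv : Γ.tdist u v = (1, 1) := by
    unfold Digraph.tdist; rw [dist_eq_one h1, dist_eq_one h2]
  have hvu : Γ.tdist v u = (1, 1) := by
    unfold Digraph.tdist; rw [dist_eq_one h1, dist_eq_one h2]
  -- the two commons of the pair (u, v') are v and u'
  have hcom1 : Function.update u j (Function.update v k g j) = v := by
    rw [Function.update_of_ne (Ne.symm hk), ← hj.eq_update]
  have hcom2 : Function.update u k (Function.update v k g k) =
      Function.update u k g := by rw [Function.update_self]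
  -- the two commons of the pair (v, u') are u and v'
  have hcom3 : Function.update v j (Function.update u k g j) = u := by
    rw [Function.update_of_ne (Ne.symm hk), ← hj.symm.eq_update]
  have hcom4 : Function.update v k (Function.update u k g k) =
      Function.update v k g := by rw [Function.update_self]
  by_cases hA : Γ.Adj v (Function.update v k g)
  · -- Case A
    have hAt : Γ.tdist v (Function.update v k g) =
        (1, Γ.dist (Function.update v k g) v) := by
      unfold Digraph.tdist; rw [dist_eq_one hA]
    obtain ⟨z, hz1, hz2⟩ := swap_ex hwdr hcomm hAt hwt
    -- z adjacent to v and to u'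
    have haz1 : Γ.Adj v z := adj_of_tdist hsc hz1
    have haz2 : Γ.Adj z (Function.update u k g) := by
      refine adj_of_dist_one hsc ?_
      have := congrArg Prod.fst hz2
      exact this
    have hpin := pin_sq (fun h => hk h.symm) (isDiff2_of hj.symm hk hvg)
      (⟨_, (diff_of_adj hund haz1).choose_spec.symm⟩)
      (⟨_, (diff_of_adj hund haz2).choose_spec⟩)
    rw [hcom3, hcom4] at hpin
    rcases hpin with rfl | rfl
    · rw [hvu] at hz1
      simp [Prod.ext_iff] at hz1
      omega
    · -- z = v' ; second swap, mid v on the pair (u, v')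
      obtain ⟨z₂, hz₃, hz₄⟩ := swap_ex hwdr hcomm huv hz1
      have haz3 : Γ.Adj u z₂ := adj_of_tdist hsc hz₃
      have haz4 : Γ.Adj z₂ (Function.update v k g) :=
        adj_of_dist_one hsc (congrArg Prod.fst hz₄)
      have hpin2 := pin_sq (fun h => hk h.symm) (isDiff2_of hj hk hg)
        (⟨_, (diff_of_adj hund haz3).choose_spec.symm⟩)
        (⟨_, (diff_of_adj hund haz4).choose_spec⟩)
      rw [hcom1, hcom2] at hpin2
      rcases hpin2 with rfl | rfl
      · rw [huv] at hz₃
        simp [Prod.ext_iff] at hz₃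
        omega
      · exact hn (adj_of_tdist hsc hz₄)
  · -- Case B : the rung (v,v') is a strict arc v' → v
    have hBdiff : IsDiff v (Function.update v k g) k := isDiff_self_update hvg
    have hadjB : Γ.Adj (Function.update v k g) v :=
      (adj_or_adj hund hBdiff).resolve_left hA
    obtain ⟨t', ht'2, htB⟩ := arc_tdist hsc hadjB hA
    obtain ⟨z, hz1, hz2⟩ := swap_ex hwdr hcomm htB hvu
    have haz1 : Γ.Adj (Function.update v k g) z :=
      adj_of_dist_one hsc (congrArg Prod.fst hz1)
    have haz2 : Γ.Adj z u := adj_of_dist_one hsc (congrArg Prod.fst hz2)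
    have hc1 : Function.update (Function.update v k g) j (u j) =
        Function.update u k g := comm1 hj.symm hk g
    have hc2 : Function.update (Function.update v k g) k (u k) = v := by
      rw [comm2, ← hvk, Function.update_eq_self]
    have hpin := pin_sq (fun h => hk h.symm) (isDiff2_of hj hk hg).symm
      (⟨_, (diff_of_adj hund haz1).choose_spec.symm⟩)
      (⟨_, (diff_of_adj hund haz2).choose_spec⟩)
    rw [hc1, hc2] at hpin
    rcases hpin with rfl | rfl
    · rw [hwt] at hz1
      simp [Prod.ext_iff] at hz1
      omega
    · rw [htB] at hz1
      simp [Prod.ext_iff] at hz1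
      omega

end SubMain

end Paper

namespace Paper

variable {S : Type*} {d : ℕ}

section StepF

variable [Finite S] {Γ : Digraph (Fin d → S)}

/-- The mixed-square configuration lemma: in a square whose two parallel edges are
strict arcs in opposite directions and whose rungs are one-way, the only possible
configuration is the directed 4-cycle, and all its arcs have the same type. -/
lemma stepF (hwdr : Γ.IsWDR) (hcomm : Γ.IsCommutative)
    (hund : Γ.underlying = hammingGraph (Fin d) S)
    {u v : Fin d → S} {j k : Fin d} (hj : IsDiff u v j) (hk : k ≠ j)
    {p q : S} {sp sq : ℕ} (hpq : p ≠ q)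
    (hFp : Γ.tdist (Function.update u k p) (Function.update v k p) = (1, sp))
    (hsp : 2 ≤ sp)
    (hBq : Γ.tdist (Function.update v k q) (Function.update u k q) = (1, sq))
    (hsq : 2 ≤ sq)
    (hEX : ¬(Γ.Adj (Function.update u k p) (Function.update u k q) ∧
        Γ.Adj (Function.update u k q) (Function.update u k p)))
    (hEY : ¬(Γ.Adj (Function.update v k p) (Function.update v k q) ∧
        Γ.Adj (Function.update v k q) (Function.update v k p))) :
    Γ.tdist (Function.update v k p) (Function.update v k q) = (1, sp) ∧ sq = sp := by
  classical
  have hsc := hwdr.1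
  set Xp := Function.update u k p with hXp
  set Yp := Function.update v k p with hYp
  set Xq := Function.update u k q with hXq
  set Yq := Function.update v k q with hYq
  have hFpadj : Γ.Adj Xp Yp := adj_of_tdist hsc hFp
  have hBqadj : Γ.Adj Yq Xq := adj_of_tdist hsc hBq
  have hFprev : Γ.tdist Yp Xp = (sp, 1) := tdist_rev.mp hFp
  have hBqrev : Γ.tdist Xq Yq = (sq, 1) := tdist_rev.mp hBq
  have hDp : ¬ Γ.Adj Yp Xp := not_adj_of_tdist hFprev (by omega)
  have hDq : ¬ Γ.Adj Xq Yq := not_adj_of_tdist hBqrev (by omega)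
  -- pinning data for the two diagonals
  have hd1 : IsDiff2 Xp Yq j k := isDiff2_diag hj hk hpq
  have hd2 : IsDiff2 Yp Xq j k := isDiff2_diag hj.symm hk hpq
  have hc1 : Function.update Xp j (Yq j) = Yp := by
    rw [hXp, hYq, Function.update_of_ne (Ne.symm hk), comm1 hj hk p]
  have hc2 : Function.update Xp k (Yq k) = Xq := by
    rw [hXp, hYq, Function.update_self, comm2]
  have hc3 : Function.update Yp j (Xq j) = Xp := by
    rw [hYp, hXq, Function.update_of_ne (Ne.symm hk), comm1 hj.symm hk p]
  have hc4 : Function.update Yp k (Xq k) = Yq := by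
    rw [hYp, hXq, Function.update_self, comm2]
  have hjk' : j ≠ k := fun h => hk h.symm
  by_cases hQR : Γ.Adj Yp Yq
  · -- the Y-rung is the arc Yp → Yq
    have hQRrev : ¬ Γ.Adj Yq Yp := fun h => hEY ⟨hQR, h⟩
    obtain ⟨uu, huu2, huut⟩ := arc_tdist hsc hQR hQRrev
    by_cases hTP : Γ.Adj Xq Xp
    · -- X-rung is Xq → Xp : the directed 4-cycle configuration
      have hTPrev : ¬ Γ.Adj Xp Xq := fun h => hEX ⟨h, hTP⟩
      -- swap (1): mid Yp on the diagonal (Xp, Yq)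
      obtain ⟨z, hz1, hz2⟩ := swap_ex hwdr hcomm hFp huut
      have haz1 : Γ.Adj Xp z := adj_of_dist_one hsc (congrArg Prod.fst hz1)
      have haz2 : Γ.Adj z Yq := adj_of_dist_one hsc (congrArg Prod.fst hz2)
      have hpin := pin_sq hjk' hd1
        (⟨_, (diff_of_adj hund haz1).choose_spec.symm⟩)
        (⟨_, (diff_of_adj hund haz2).choose_spec⟩)
      rw [hc1, hc2] at hpin
      rcases hpin with rfl | rfl
      · -- z = Yp : conclude uu = sp
        rw [hFp] at hz1
        have huusp : uu = sp := by
          simp [Prod.ext_iff] at hz1; omega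
        rw [huusp] at huut
        -- now tdist Yp Yq = (1, sp); swap (2): mid Yq on the diagonal (Yp, Xq)
        obtain ⟨z₂, hz₃, hz₄⟩ := swap_ex hwdr hcomm huut hBq
        have haz3 : Γ.Adj Yp z₂ := adj_of_dist_one hsc (congrArg Prod.fst hz₃)
        have haz4 : Γ.Adj z₂ Xq := adj_of_dist_one hsc (congrArg Prod.fst hz₄)
        have hpin2 := pin_sq hjk' hd2
          (⟨_, (diff_of_adj hund haz3).choose_spec.symm⟩)
          (⟨_, (diff_of_adj hund haz4).choose_spec⟩)
        rw [hc3, hc4] at hpin2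
        rcases hpin2 with rfl | rfl
        · -- z₂ = Xp : impossible, sp = 1
          rw [hFprev] at hz₃
          simp [Prod.ext_iff] at hz₃
          omega
        · -- z₂ = Yq : sq = sp
          rw [huut] at hz₃
          have : sq = sp := by simp [Prod.ext_iff] at hz₃; omega
          exact ⟨huut, this⟩
      · -- z = Xq : arc Xp → Xq, contradiction
        exact absurd haz1 hTPrev
    · -- X-rung is Xp → Xq : kill
      exfalso
      have hPT : Γ.Adj Xp Xq :=
        (adj_or_adj hund (isDiff_line hpq u k)).resolve_right hTP
      obtain ⟨vp, hvp2, hvpt⟩ := arc_tdist hsc hPT hTP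
      obtain ⟨z, hz1, hz2⟩ := swap_ex hwdr hcomm hvpt hBqrev
      have haz1 : Γ.Adj z Xp :=
        adj_of_dist_one hsc (congrArg Prod.fst (tdist_rev.mp hz1))
      have haz2 : Γ.Adj z Yq := adj_of_dist_one hsc (congrArg Prod.fst hz2)
      have hpin := pin_sq hjk' hd1
        (⟨_, (diff_of_adj hund haz1).choose_spec⟩)
        (⟨_, (diff_of_adj hund haz2).choose_spec⟩)
      rw [hc1, hc2] at hpin
      rcases hpin with rfl | rfl
      · exact hDp haz1
      · rw [hvpt] at hz1
        simp [Prod.ext_iff] at hz1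
        omega
  · -- the Y-rung is the arc Yq → Yp : kill
    exfalso
    have hRQ : Γ.Adj Yq Yp :=
      (adj_or_adj hund (isDiff_line hpq v k)).resolve_left hQR
    obtain ⟨uq, huq2, huqt⟩ := arc_tdist hsc hRQ hQR
    have huqrev : Γ.tdist Yp Yq = (uq, 1) := tdist_rev.mp huqt
    -- swap: mid Yp on the diagonal (Xp, Yq)
    obtain ⟨z, hz1, hz2⟩ := swap_ex hwdr hcomm hFp huqrev
    have haz1 : Γ.Adj z Xp :=
      adj_of_dist_one hsc (congrArg Prod.fst (tdist_rev.mp hz1))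
    have haz2 : Γ.Adj z Yq := adj_of_dist_one hsc (congrArg Prod.fst hz2)
    have hpin := pin_sq hjk' hd1
      (⟨_, (diff_of_adj hund haz1).choose_spec⟩)
      (⟨_, (diff_of_adj hund haz2).choose_spec⟩)
    rw [hc1, hc2] at hpin
    rcases hpin with rfl | rfl
    · -- z = Yp : arc Yp → Xp, contradiction
      exact hDp haz1
    · -- z = Xq : arc Xq → Yq, contradiction
      exact hDq haz2

end StepF

end Paper

namespace Paper

variable {S : Type*} {d : ℕ}

section Transport

variable [Finite S] {Γ : Digraph (Fin d → S)}

/-- **Parallel transport of arcs.** If `q > 2`, an arc between two vertices differing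
in coordinate `j` transports to any parallel pair obtained by changing a
coordinate `k ≠ j` in both endpoints. -/
lemma transport (hq : 2 < Nat.card S) (hwdr : Γ.IsWDR) (hcomm : Γ.IsCommutative)
    (hund : Γ.underlying = hammingGraph (Fin d) S)
    {u v : Fin d → S} {j k : Fin d} (hj : IsDiff u v j) (hk : k ≠ j)
    (h1 : Γ.Adj u v) (g : S) :
    Γ.Adj (Function.update u k g) (Function.update v k g) := by
  classical
  have hsc := hwdr.1
  have hvk : v k = u k := (hj.2 k hk).symm
  by_cases hsym : Γ.Adj v u
  · exact submain1 hwdr hcomm hund hj hk h1 hsym g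
  by_cases hg : g = u k
  · subst hg
    rw [Function.update_eq_self, ← hvk, Function.update_eq_self]
    exact h1
  replace hg : u k ≠ g := fun h => hg h.symm
  by_contra hn
  -- the ladder of parallel edges
  set Yl : S → (Fin d → S) := fun h => Function.update v k h with hYl
  set Xl : S → (Fin d → S) := fun h => Function.update u k h with hXl
  have hXuk : Xl (u k) = u := Function.update_eq_self k u
  have hYuk : Yl (u k) = v := by
    show Function.update v k (u k) = v
    rw [← hvk]; exact Function.update_eq_self k v
  -- forward and backward levels
  have hFB : ∀ h, Γ.Adj (Xl h) (Yl h) ∨ Γ.Adj (Yl h) (Xl h) :=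
    fun h => adj_or_adj hund (isDiff_update hj hk h)
  have hD : ∀ h, ¬(Γ.Adj (Xl h) (Yl h) ∧ Γ.Adj (Yl h) (Xl h)) := by
    rintro h ⟨hf, hb⟩
    have h3 := submain1 hwdr hcomm hund (isDiff_update hj hk h).symm hk hb hf (u k)
    rw [show Function.update (Function.update v k h) k (u k) = Yl (u k) from comm2 .. ,
        show Function.update (Function.update u k h) k (u k) = Xl (u k) from comm2 .. ,
        hXuk, hYuk] at h3
    exact hsym h3
  have hFuk : Γ.Adj (Xl (u k)) (Yl (u k)) := by rw [hXuk, hYuk]; exact h1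
  have hBg : Γ.Adj (Yl g) (Xl g) := (hFB g).resolve_left hn
  -- Step E: rungs between a forward level and a backward level are one-way
  have hEX : ∀ p q, Γ.Adj (Xl p) (Yl p) → Γ.Adj (Yl q) (Xl q) →
      ¬(Γ.Adj (Xl p) (Xl q) ∧ Γ.Adj (Xl q) (Xl p)) := by
    rintro p q hfp hbq ⟨hx1, hx2⟩
    have hpq : p ≠ q := by rintro rfl; exact hD p ⟨hfp, hbq⟩
    obtain ⟨sp, hsp2, hspt⟩ := arc_tdist hsc hfp (fun h => hD p ⟨hfp, h⟩)
    have hXqXp : Γ.tdist (Xl q) (Xl p) = (1, 1) := by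
      unfold Digraph.tdist; rw [dist_eq_one hx2, dist_eq_one hx1]
    obtain ⟨z, hz1, hz2⟩ := swap_ex hwdr hcomm hXqXp hspt
    have haz1 : Γ.Adj (Xl q) z := adj_of_dist_one hsc (congrArg Prod.fst hz1)
    have haz2 : Γ.Adj z (Yl p) := adj_of_dist_one hsc (congrArg Prod.fst hz2)
    have hd1 : IsDiff2 (Xl q) (Yl p) j k := isDiff2_diag hj hk (Ne.symm hpq)
    have hc1 : Function.update (Xl q) j (Yl p j) = Yl q := by
      show Function.update (Function.update u k q) j (Function.update v k p j) = _
      rw [Function.update_of_ne (Ne.symm hk), comm1 hj hk q]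
    have hc2 : Function.update (Xl q) k (Yl p k) = Xl p := by
      show Function.update (Function.update u k q) k (Function.update v k p k) = _
      rw [Function.update_self, comm2]
    have hpin := pin_sq (fun h => hk h.symm) hd1
      (⟨_, (diff_of_adj hund haz1).choose_spec.symm⟩)
      (⟨_, (diff_of_adj hund haz2).choose_spec⟩)
    rw [hc1, hc2] at hpin
    rcases hpin with rfl | rfl
    · exact hD q ⟨adj_of_dist_one hsc (congrArg Prod.fst hz1), hbq⟩
    · rw [hXqXp] at hz1
      simp [Prod.ext_iff] at hz1
      omega
  have hEY : ∀ p q, Γ.Adj (Xl p) (Yl p) → Γ.Adj (Yl q) (Xl q) →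
      ¬(Γ.Adj (Yl p) (Yl q) ∧ Γ.Adj (Yl q) (Yl p)) := by
    rintro p q hfp hbq ⟨hy1, hy2⟩
    have hpq : p ≠ q := by rintro rfl; exact hD p ⟨hfp, hbq⟩
    -- transport the symmetric Y-rung to the X-rung
    have hx1 := submain1 hwdr hcomm hund (isDiff_line hpq v k) (Ne.symm hk) hy1 hy2 (u j)
    have hx2 := submain1 hwdr hcomm hund (isDiff_line (Ne.symm hpq) v k) (Ne.symm hk)
      hy2 hy1 (u j)
    rw [comm1 hj.symm hk p, comm1 hj.symm hk q] at hx1 hx2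
    exact hEX p q hfp hbq ⟨hx1, hx2⟩
  -- the common type of all the parallel edges
  obtain ⟨s, hs2, hsB⟩ := arc_tdist hsc hBg (fun h => hD g ⟨h, hBg⟩)
  have claim1 : ∀ p, Γ.Adj (Xl p) (Yl p) → Γ.tdist (Xl p) (Yl p) = (1, s) := by
    intro p hfp
    obtain ⟨sp, hsp2, hspt⟩ := arc_tdist hsc hfp (fun h => hD p ⟨hfp, h⟩)
    have hpg : p ≠ g := by rintro rfl; exact hD p ⟨hfp, hBg⟩
    have hF := stepF hwdr hcomm hund hj hk hpg hspt hsp2 hsB hs2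
      (hEX p g hfp hBg) (hEY p g hfp hBg)
    rw [hF.2]; exact hspt
  have claim2 : ∀ q, Γ.Adj (Yl q) (Xl q) → Γ.tdist (Yl q) (Xl q) = (1, s) := by
    intro q hbq
    obtain ⟨sq, hsq2, hsqt⟩ := arc_tdist hsc hbq (fun h => hD q ⟨h, hbq⟩)
    have hne : u k ≠ q := by rintro rfl; exact hD _ ⟨hFuk, hbq⟩
    have hF := stepF hwdr hcomm hund hj hk hne (claim1 (u k) hFuk) hs2 hsqt hsq2
      (hEX _ q hFuk hbq) (hEY _ q hFuk hbq)
    rw [← hF.2]; exact hsqt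
  have hcross : ∀ p q, Γ.Adj (Xl p) (Yl p) → Γ.Adj (Yl q) (Xl q) →
      Γ.tdist (Yl p) (Yl q) = (1, s) := by
    intro p q hfp hbq
    have hpq : p ≠ q := by rintro rfl; exact hD p ⟨hfp, hbq⟩
    exact (stepF hwdr hcomm hund hj hk hpq (claim1 p hfp) hs2 (claim2 q hbq) hs2
      (hEX p q hfp hbq) (hEY p q hfp hbq)).1
  -- memberships of the two types in the two-way distance set
  have h1s : ((1 : ℕ), s) ∈ Γ.tdSet := ⟨_, _, hcross (u k) g hFuk hBg⟩
  have hs1 : ((s : ℕ), 1) ∈ Γ.tdSet := ⟨_, _, tdist_rev.mp (hcross (u k) g hFuk hBg)⟩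
  -- the counting contradiction
  set Fset : Set S := {h | Γ.Adj (Xl h) (Yl h)} with hFset
  set Bset : Set S := {h | Γ.Adj (Yl h) (Xl h)} with hBset
  have hYinj : Function.Injective Yl := update_injective v k
  by_cases hF2 : ∃ ν₁, ν₁ ∈ Fset ∧ ∃ ν₂, ν₂ ∈ Fset ∧ ν₁ ≠ ν₂
  · -- Case 1 : at least two forward levels
    obtain ⟨ν₁, hν₁, ν₂, hν₂, hνne⟩ := hF2
    have hsubA : Yl '' Bset ⊆ Γ.P (1, s) (s, 1) (Yl ν₁) (Yl ν₂) := by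
      rintro w ⟨q, hq, rfl⟩
      exact ⟨hcross ν₁ q hν₁ hq, tdist_rev.mp (hcross ν₂ q hν₂ hq)⟩
    have hsubC : Γ.P (s, 1) (1, s) (Yl ν₁) (Yl ν₂) ⊆
        Γ.P (s, 1) (1, s) (Yl ν₁) (Yl g) := by
      rintro z ⟨hz1, hz2⟩
      have haz1 : Γ.Adj z (Yl ν₁) :=
        adj_of_dist_one hsc (congrArg Prod.fst (tdist_rev.mp hz1))
      have haz2 : Γ.Adj z (Yl ν₂) := adj_of_dist_one hsc (congrArg Prod.fst hz2)
      have hzeq : z = Yl (z k) := pin_line' hνne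
        (⟨_, (diff_of_adj hund haz1).choose_spec⟩)
        (⟨_, (diff_of_adj hund haz2).choose_spec⟩)
      have hρ : Γ.Adj (Xl (z k)) (Yl (z k)) := by
        rcases hFB (z k) with h | h
        · exact h
        · exfalso
          have := hcross ν₁ (z k) hν₁ h
          rw [← hzeq] at this
          rw [this] at hz1
          simp [Prod.ext_iff] at hz1
          omega
      refine ⟨hz1, ?_⟩
      rw [hzeq]
      exact hcross (z k) g hρ hBg
    have hsubC' : Γ.P (1, s) (s, 1) (Yl ν₁) (Yl g) ⊆ Yl '' (Bset \ {g}) := by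
      rintro z ⟨hz1, hz2⟩
      have haz1 : Γ.Adj (Yl ν₁) z := adj_of_dist_one hsc (congrArg Prod.fst hz1)
      have haz2 : Γ.Adj (Yl g) z :=
        adj_of_dist_one hsc (congrArg Prod.fst (tdist_rev.mp hz2))
      have hν₁g : ν₁ ≠ g := by rintro rfl; exact hD ν₁ ⟨hν₁, hBg⟩
      have hzeq : z = Yl (z k) := pin_line' hν₁g
        (⟨_, (diff_of_adj hund haz1).choose_spec.symm⟩)
        (⟨_, (diff_of_adj hund haz2).choose_spec.symm⟩)
      have hρ : Γ.Adj (Yl (z k)) (Xl (z k)) := by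
        rcases hFB (z k) with h | h
        · exfalso
          have := hcross (z k) g h hBg
          rw [← hzeq] at this
          rw [this] at hz2
          simp [Prod.ext_iff] at hz2
          omega
        · exact h
      have hzg : z k ≠ g := by
        rintro he
        rw [he] at hzeq
        rw [hzeq, tdist_self] at hz2
        rw [Prod.mk.injEq] at hz2
        omega
      exact ⟨z k, ⟨hρ, hzg⟩, hzeq.symm⟩
    -- cardinalities
    have hcard1 : Nat.card (Γ.P (1, s) (s, 1) (Yl ν₁) (Yl ν₂)) =
        Nat.card (Γ.P (s, 1) (1, s) (Yl ν₁) (Yl ν₂)) := swap_card hwdr hcomm h1s hs1 _ _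
    have hcard2 : Nat.card (Γ.P (s, 1) (1, s) (Yl ν₁) (Yl g)) =
        Nat.card (Γ.P (1, s) (s, 1) (Yl ν₁) (Yl g)) := swap_card hwdr hcomm hs1 h1s _ _
    rw [Nat.card_coe_set_eq, Nat.card_coe_set_eq] at hcard1 hcard2
    have hn1 : Bset.ncard ≤ (Γ.P (1, s) (s, 1) (Yl ν₁) (Yl ν₂)).ncard := by
      rw [← Set.ncard_image_of_injective Bset hYinj]
      exact Set.ncard_le_ncard hsubA (Set.toFinite _)
    have hn2 : (Γ.P (s, 1) (1, s) (Yl ν₁) (Yl ν₂)).ncard ≤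
        (Γ.P (s, 1) (1, s) (Yl ν₁) (Yl g)).ncard :=
      Set.ncard_le_ncard hsubC (Set.toFinite _)
    have hn3 : (Γ.P (1, s) (s, 1) (Yl ν₁) (Yl g)).ncard ≤ (Yl '' (Bset \ {g})).ncard :=
      Set.ncard_le_ncard hsubC' (Set.toFinite _)
    have hn4 : (Yl '' (Bset \ {g})).ncard = Bset.ncard - 1 := by
      rw [Set.ncard_image_of_injective _ hYinj]
      exact Set.ncard_diff_singleton_of_mem (s := Bset) hBg
    have hn5 : 0 < Bset.ncard := (Set.ncard_pos (Set.toFinite _)).mpr ⟨g, hBg⟩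
    omega
  · -- Case 2 : a single forward level; then there are two backward levels
    have hFsub : ∀ h, h ∈ Fset → h = u k := by
      intro h hh
      by_contra hne
      exact hF2 ⟨h, hh, u k, hFuk, hne⟩
    have hBig : 1 < (Set.univ \ {u k} : Set S).ncard := by
      have h1 : (Set.univ \ {u k} : Set S).ncard = Nat.card S - 1 := by
        rw [Set.ncard_diff_singleton_of_mem (Set.mem_univ _),
          Set.ncard_univ]
      omega
    obtain ⟨b₁, b₂, hb₁, hb₂, hbne⟩ :=
      (Set.one_lt_ncard_iff (Set.toFinite _)).mp hBig
    have hb₁ne : b₁ ≠ u k := by simpa using hb₁.2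
    have hb₂ne : b₂ ≠ u k := by simpa using hb₂.2
    have hb₁B : Γ.Adj (Yl b₁) (Xl b₁) :=
      (hFB b₁).resolve_left (fun h => hb₁ne (hFsub _ h))
    have hb₂B : Γ.Adj (Yl b₂) (Xl b₂) :=
      (hFB b₂).resolve_left (fun h => hb₂ne (hFsub _ h))
    have hsubA : Yl '' Fset ⊆ Γ.P (s, 1) (1, s) (Yl b₁) (Yl b₂) := by
      rintro w ⟨p, hp, rfl⟩
      exact ⟨tdist_rev.mp (hcross p b₁ hp hb₁B), hcross p b₂ hp hb₂B⟩
    have hsubC : Γ.P (1, s) (s, 1) (Yl b₁) (Yl b₂) ⊆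
        Γ.P (1, s) (s, 1) (Yl b₁) (Yl (u k)) := by
      rintro z ⟨hz1, hz2⟩
      have haz1 : Γ.Adj (Yl b₁) z := adj_of_dist_one hsc (congrArg Prod.fst hz1)
      have haz2 : Γ.Adj (Yl b₂) z :=
        adj_of_dist_one hsc (congrArg Prod.fst (tdist_rev.mp hz2))
      have hzeq : z = Yl (z k) := pin_line' hbne
        (⟨_, (diff_of_adj hund haz1).choose_spec.symm⟩)
        (⟨_, (diff_of_adj hund haz2).choose_spec.symm⟩)
      have hρ : Γ.Adj (Yl (z k)) (Xl (z k)) := by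
        rcases hFB (z k) with h | h
        · exfalso
          have := hcross (z k) b₁ h hb₁B
          have h2 := tdist_rev.mp this
          rw [← hzeq] at h2
          rw [h2] at hz1
          simp [Prod.ext_iff] at hz1
          omega
        · exact h
      refine ⟨hz1, ?_⟩
      rw [hzeq]
      exact tdist_rev.mp (hcross (u k) (z k) hFuk hρ)
    have hsubC' : Γ.P (s, 1) (1, s) (Yl b₁) (Yl (u k)) ⊆ (∅ : Set (Fin d → S)) := by
      rintro z ⟨hz1, hz2⟩
      have haz1 : Γ.Adj z (Yl b₁) :=
        adj_of_dist_one hsc (congrArg Prod.fst (tdist_rev.mp hz1))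
      have haz2 : Γ.Adj z (Yl (u k)) := adj_of_dist_one hsc (congrArg Prod.fst hz2)
      have hb₁uk : b₁ ≠ u k := hb₁ne
      have hzeq : z = Yl (z k) := pin_line' hb₁uk
        (⟨_, (diff_of_adj hund haz1).choose_spec⟩)
        (⟨_, (diff_of_adj hund haz2).choose_spec⟩)
      exfalso
      rcases hFB (z k) with h | h
      · -- forward level : z = Yl (u k), the second leg is degenerate
        have := hFsub _ h
        rw [this] at hzeq
        rw [hzeq, tdist_self] at hz2
        rw [Prod.mk.injEq] at hz2
        omega
      · -- backward level : contradicts the direction of the rung to level u k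
        have := tdist_rev.mp (hcross (u k) (z k) hFuk h)
        rw [← hzeq] at this
        rw [this] at hz2
        simp [Prod.ext_iff] at hz2
        omega
    have hcard1 : Nat.card (Γ.P (s, 1) (1, s) (Yl b₁) (Yl b₂)) =
        Nat.card (Γ.P (1, s) (s, 1) (Yl b₁) (Yl b₂)) := swap_card hwdr hcomm hs1 h1s _ _
    have hcard2 : Nat.card (Γ.P (1, s) (s, 1) (Yl b₁) (Yl (u k))) =
        Nat.card (Γ.P (s, 1) (1, s) (Yl b₁) (Yl (u k))) := swap_card hwdr hcomm h1s hs1 _ _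
    rw [Nat.card_coe_set_eq, Nat.card_coe_set_eq] at hcard1 hcard2
    have hn1 : Fset.ncard ≤ (Γ.P (s, 1) (1, s) (Yl b₁) (Yl b₂)).ncard := by
      rw [← Set.ncard_image_of_injective Fset hYinj]
      exact Set.ncard_le_ncard hsubA (Set.toFinite _)
    have hn2 : (Γ.P (1, s) (s, 1) (Yl b₁) (Yl b₂)).ncard ≤
        (Γ.P (1, s) (s, 1) (Yl b₁) (Yl (u k))).ncard :=
      Set.ncard_le_ncard hsubC (Set.toFinite _)
    have hn3 : (Γ.P (s, 1) (1, s) (Yl b₁) (Yl (u k))).ncard = 0 := by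
      have := Set.ncard_le_ncard hsubC' (Set.toFinite _)
      simpa using this
    have hn5 : 0 < Fset.ncard := (Set.ncard_pos (Set.toFinite _)).mpr ⟨u k, hFuk⟩
    omega

end Transport

end Paper

namespace Paper

variable {S : Type*} {d : ℕ}

section Glue

variable {i' : ℕ}

lemma eq_mk_of_val {n : ℕ} {l : Fin n} {m : ℕ} (hm : m < n) (h : l.1 = m) :
    l = ⟨m, hm⟩ := Fin.ext h

lemma pad_apply_lt (o : S) {m : ℕ} (α : Fin m → S) {l : Fin d} (hl : l.1 < m) :
    pad o d m α l = α ⟨l.1, hl⟩ := dif_pos hl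

lemma pad_apply_ge (o : S) {m : ℕ} (α : Fin m → S) {l : Fin d} (hl : ¬ l.1 < m) :
    pad o d m α l = o := dif_neg hl

lemma snoc_apply_lt {γ : Fin i' → S} {c : S} : ∀ {t : Fin (i' + 1)} (h : t.1 < i'),
    (Fin.snoc γ c : Fin (i' + 1) → S) t = γ ⟨t.1, h⟩ := by
  intro t
  induction t using Fin.lastCases with
  | last => intro h; simp at h
  | cast i =>
    intro h
    rw [Fin.snoc_castSucc]
    congr 1

lemma snoc_apply_last {γ : Fin i' → S} {c : S} : ∀ {t : Fin (i' + 1)} (h : t.1 = i'),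
    (Fin.snoc γ c : Fin (i' + 1) → S) t = c := by
  intro t
  induction t using Fin.lastCases with
  | last => intro _; rw [Fin.snoc_last]
  | cast i =>
    intro h
    exfalso
    have := i.2
    simp only [Fin.coe_castSucc] at h
    omega

lemma padS_at_last (o : S) (hd : i' + 1 ≤ d) (γ : Fin i' → S) (c : S) :
    pad o d (i' + 1) (Fin.snoc γ c) ⟨i', by omega⟩ = c := by
  rw [pad_apply_lt o _ (show i' < i' + 1 by omega), snoc_apply_last rfl]

lemma padS_at_lt (o : S) (hd : i' + 1 ≤ d) (γ : Fin i' → S) (c : S) {l : ℕ}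
    (hl : l < i') (hld : l < d) :
    pad o d (i' + 1) (Fin.snoc γ c) ⟨l, hld⟩ = γ ⟨l, hl⟩ := by
  rw [pad_apply_lt o _ (show l < i' + 1 by omega), snoc_apply_lt hl]

/-- Changing the last coordinate of a padded snoc vector. -/
lemma upd_padS_last (o : S) (hd : i' + 1 ≤ d) (γ : Fin i' → S) (c c' : S) :
    Function.update (pad o d (i' + 1) (Fin.snoc γ c)) ⟨i', by omega⟩ c' =
      pad o d (i' + 1) (Fin.snoc γ c') := by
  funext l
  by_cases hl : l = (⟨i', by omega⟩ : Fin d)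
  · subst hl
    rw [Function.update_self, padS_at_last o hd]
  · rw [Function.update_of_ne hl]
    by_cases h1 : l.1 < i'
    · rw [pad_apply_lt o _ (show l.1 < i' + 1 by omega),
        pad_apply_lt o _ (show l.1 < i' + 1 by omega),
        snoc_apply_lt h1, snoc_apply_lt h1]
    · by_cases h2 : l.1 < i' + 1
      · exact absurd (eq_mk_of_val (by omega) (by omega)) hl
      · rw [pad_apply_ge o _ h2, pad_apply_ge o _ h2]

/-- Changing an inner coordinate of a padded snoc vector. -/
lemma upd_padS_coord (o : S) (hd : i' + 1 ≤ d) (γ : Fin i' → S) (c : S) {n : ℕ}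
    (hn : n < i') (x : S) :
    Function.update (pad o d (i' + 1) (Fin.snoc γ c)) ⟨n, by omega⟩ x =
      pad o d (i' + 1) (Fin.snoc (Function.update γ ⟨n, hn⟩ x) c) := by
  funext l
  by_cases hl : l = (⟨n, by omega⟩ : Fin d)
  · subst hl
    rw [Function.update_self, padS_at_lt o hd _ _ hn, Function.update_self]
  · rw [Function.update_of_ne hl]
    by_cases h1 : l.1 < i'
    · rw [pad_apply_lt o _ (show l.1 < i' + 1 by omega),
        pad_apply_lt o _ (show l.1 < i' + 1 by omega),
        snoc_apply_lt h1, snoc_apply_lt h1,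
        Function.update_of_ne (show (⟨l.1, h1⟩ : Fin i') ≠ ⟨n, hn⟩ from
          fun hh => hl (eq_mk_of_val (by omega) (congrArg Fin.val hh)))]
    · by_cases h2 : l.1 < i' + 1
      · rw [pad_apply_lt o _ h2, pad_apply_lt o _ h2,
          snoc_apply_last (show l.1 = i' by omega),
          snoc_apply_last (show l.1 = i' by omega)]
      · rw [pad_apply_ge o _ h2, pad_apply_ge o _ h2]

/-- The `i'`-padding agrees with the `(i'+1)`-padding of the `o`-extension. -/
lemma pad_eq_padS (o : S) (hd : i' + 1 ≤ d) (γ : Fin i' → S) :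
    pad o d i' γ = pad o d (i' + 1) (Fin.snoc γ o) := by
  funext l
  by_cases h1 : l.1 < i'
  · rw [pad_apply_lt o _ h1, pad_apply_lt o _ (show l.1 < i' + 1 by omega),
      snoc_apply_lt h1]
  · by_cases h2 : l.1 < i' + 1
    · rw [pad_apply_ge o _ h1, pad_apply_lt o _ h2,
        snoc_apply_last (show l.1 = i' by omega)]
    · rw [pad_apply_ge o _ h1, pad_apply_ge o _ h2]

/-- The all-`o` vector with `c` in the last slot. -/
lemma upd_o_eq_padS (o : S) (hd : i' + 1 ≤ d) (c : S) :
    Function.update (fun _ => o) ⟨i', by omega⟩ c =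
      pad o d (i' + 1) (Fin.snoc (fun _ => o) c) := by
  funext l
  by_cases hl : l = (⟨i', by omega⟩ : Fin d)
  · subst hl
    rw [Function.update_self, padS_at_last o hd]
  · rw [Function.update_of_ne hl]
    by_cases h1 : l.1 < i'
    · rw [pad_apply_lt o _ (show l.1 < i' + 1 by omega), snoc_apply_lt h1]
    · by_cases h2 : l.1 < i' + 1
      · exact absurd (eq_mk_of_val (by omega) (by omega)) hl
      · rw [pad_apply_ge o _ h2]

variable [Finite S] {Γ : Digraph (Fin d → S)}

/-- The padded snoc vectors with distinct last entries differ exactly there. -/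
lemma isDiff_padS (o : S) (hd : i' + 1 ≤ d) {γ : Fin i' → S} {c c' : S} (hcc : c ≠ c') :
    IsDiff (pad o d (i' + 1) (Fin.snoc γ c)) (pad o d (i' + 1) (Fin.snoc γ c'))
      ⟨i', by omega⟩ := by
  constructor
  · rw [padS_at_last o hd, padS_at_last o hd]; exact hcc
  · intro l hl
    by_cases h1 : l.1 < i'
    · rw [pad_apply_lt o _ (show l.1 < i' + 1 by omega),
        pad_apply_lt o _ (show l.1 < i' + 1 by omega),
        snoc_apply_lt h1, snoc_apply_lt h1]
    · by_cases h2 : l.1 < i' + 1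
      · exact absurd (eq_mk_of_val (by omega) (by omega)) hl
      · rw [pad_apply_ge o _ h2, pad_apply_ge o _ h2]

/-- Transport in the last coordinate. -/
lemma trans_c (hq : 2 < Nat.card S) (hwdr : Γ.IsWDR) (hcomm : Γ.IsCommutative)
    (hund : Γ.underlying = hammingGraph (Fin d) S) (o : S) (hd : i' + 1 ≤ d)
    {α β : Fin i' → S} {c : S} (c' : S)
    (h : Γ.Adj (pad o d (i' + 1) (Fin.snoc α c)) (pad o d (i' + 1) (Fin.snoc β c))) :
    Γ.Adj (pad o d (i' + 1) (Fin.snoc α c')) (pad o d (i' + 1) (Fin.snoc β c'))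
    := by
  obtain ⟨j₀, hj₀⟩ := diff_of_adj hund h
  have hjne : (⟨i', by omega⟩ : Fin d) ≠ j₀ := by
    rintro rfl
    exact hj₀.1 (by rw [padS_at_last o hd, padS_at_last o hd])
  have ht := transport hq hwdr hcomm hund hj₀ hjne h c'
  rwa [upd_padS_last o hd, upd_padS_last o hd] at ht

/-- Transport in the first `i'` coordinates. -/
lemma trans_gamma (hq : 2 < Nat.card S) (hwdr : Γ.IsWDR) (hcomm : Γ.IsCommutative)
    (hund : Γ.underlying = hammingGraph (Fin d) S) (o : S) (hd : i' + 1 ≤ d)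
    {γ : Fin i' → S} {c c' : S} (hcc : c ≠ c') (δ : Fin i' → S)
    (h : Γ.Adj (pad o d (i' + 1) (Fin.snoc γ c)) (pad o d (i' + 1) (Fin.snoc γ c'))) :
    Γ.Adj (pad o d (i' + 1) (Fin.snoc δ c)) (pad o d (i' + 1) (Fin.snoc δ c')) := by
  suffices H : ∀ n (δ : Fin i' → S), (∀ l : Fin i', ¬ l.1 < n → δ l = γ l) →
      Γ.Adj (pad o d (i' + 1) (Fin.snoc δ c)) (pad o d (i' + 1) (Fin.snoc δ c')) by
    exact H i' δ (fun l hl => absurd l.2 hl)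
  intro n
  induction n with
  | zero =>
    intro δ hδ
    have hdg : δ = γ := funext fun l => hδ l (by omega)
    rw [hdg]; exact h
  | succ n ih =>
    intro δ hδ
    by_cases hn : n < i'
    · have hδ' : ∀ l : Fin i', ¬ l.1 < n →
          Function.update δ ⟨n, hn⟩ (γ ⟨n, hn⟩) l = γ l := by
        intro l hl
        by_cases hln : l = ⟨n, hn⟩
        · subst hln; rw [Function.update_self]
        · rw [Function.update_of_ne hln]
          refine hδ l ?_
          have : l.1 ≠ n := fun hh => hln (Fin.ext hh)
          omega
      have hb := ih _ hδ'
      have hdiff := isDiff_padS o hd (γ := Function.update δ ⟨n, hn⟩ (γ ⟨n, hn⟩)) hcc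
      have hkne : (⟨n, by omega⟩ : Fin d) ≠ (⟨i', by omega⟩ : Fin d) :=
        Fin.ne_of_val_ne (show n ≠ i' by omega)
      have ht := transport hq hwdr hcomm hund hdiff hkne hb (δ ⟨n, hn⟩)
      rw [upd_padS_coord o hd _ _ hn, upd_padS_coord o hd _ _ hn,
        Function.update_idem, Function.update_eq_self] at ht
      exact ht
    · exact ih δ (fun l hl => absurd (lt_of_lt_of_le l.2 (le_of_not_gt hn)) hl)

end Glue

end Paper


open Paper in
/-- **Lemma 4.6.** If `q > 2`, then `Γ^{[i]} = Γ^{[i−1]} □ Γ^i` for `2 ≤ i ≤ d`: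
writing `i = i' + 1`, an arc of `Γ^{[i]}` between `(α,e)` and `(β,f)` exists iff
`e = f` and `(α,β)` is an arc of `Γ^{[i−1]}`, or `α = β` and `(e,f)` is an arc of
`Γ^i`. -/
theorem lemma_product {S : Type*} [Finite S] {d : ℕ}
    (Γ : Paper.Digraph (Fin d → S)) (hq : 2 < Nat.card S)
    (hwdr : Γ.IsWDR) (hcomm : Γ.IsCommutative)
    (hund : Γ.underlying = hammingGraph (Fin d) S)
    (o : S) (i' : ℕ) (h1 : 1 ≤ i') (h2 : i' + 1 ≤ d) :
    ∀ (α β : Fin i' → S) (e f : S),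
      (Γ.trunc o (i' + 1)).Adj (Fin.snoc α e) (Fin.snoc β f) ↔
        ((e = f ∧ (Γ.trunc o i').Adj α β) ∨
          (α = β ∧ (Γ.coordDigraph o ⟨i', by omega⟩).Adj e f)) := by
  intro α β e f
  have hd : i' + 1 ≤ d := h2
  constructor
  · intro h
    have h' : Γ.Adj (pad o d (i' + 1) (Fin.snoc α e))
        (pad o d (i' + 1) (Fin.snoc β f)) := h
    obtain ⟨j₀, hj₀⟩ := diff_of_adj hund h'
    by_cases hcase : j₀ = (⟨i', by omega⟩ : Fin d)
    · right
      subst hcase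
      have hab : α = β := by
        funext l
        have hlk : (⟨l.1, by omega⟩ : Fin d) ≠ (⟨i', by omega⟩ : Fin d) :=
          Fin.ne_of_val_ne (show l.1 ≠ i' by have := l.2; omega)
        have h3 := hj₀.2 _ hlk
        rw [padS_at_lt o hd _ _ l.2, padS_at_lt o hd _ _ l.2] at h3
        exact h3
      refine ⟨hab, ?_⟩
      show Γ.Adj (Function.update (fun _ => o) ⟨i', by omega⟩ e)
        (Function.update (fun _ => o) ⟨i', by omega⟩ f)
      rw [upd_o_eq_padS o hd, upd_o_eq_padS o hd]
      have hef : e ≠ f := by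
        intro hh
        apply hj₀.1
        rw [padS_at_last o hd, padS_at_last o hd, hh]
      rw [← hab] at h'
      exact trans_gamma hq hwdr hcomm hund o hd hef (fun _ => o) h'
    · left
      have hef : e = f := by
        have h3 := hj₀.2 (⟨i', by omega⟩ : Fin d) (fun hh => hcase hh.symm)
        rw [padS_at_last o hd, padS_at_last o hd] at h3
        exact h3
      refine ⟨hef, ?_⟩
      show Γ.Adj (pad o d i' α) (pad o d i' β)
      rw [pad_eq_padS o hd, pad_eq_padS o hd]
      rw [← hef] at h'
      exact trans_c hq hwdr hcomm hund o hd o h'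
  · rintro (⟨hef, hadj⟩ | ⟨hab, hadj⟩)
    · subst hef
      have h' : Γ.Adj (pad o d (i' + 1) (Fin.snoc α o))
          (pad o d (i' + 1) (Fin.snoc β o)) := by
        rw [← pad_eq_padS o hd, ← pad_eq_padS o hd]
        exact hadj
      exact trans_c hq hwdr hcomm hund o hd e h'
    · subst hab
      have h' : Γ.Adj (pad o d (i' + 1) (Fin.snoc (fun _ => o) e))
          (pad o d (i' + 1) (Fin.snoc (fun _ => o) f)) := by
        rw [← upd_o_eq_padS o hd, ← upd_o_eq_padS o hd]
        exact hadj
      have hef : e ≠ f := by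
        rintro rfl
        exact Γ.loopless _ h'
      exact trans_gamma hq hwdr hcomm hund o hd hef α h'
end
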